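/- arXiv:0905.0679 — 2 statements merged into one kernel-verified Lean document; each statement's English description precedes it below -/
import Mathlib

section
/- For generic complex parameters a, b, c, d, u, v, w and base q with |q|<1, the terminating balanced basic hypergeometric series satisfies: (c−w)(1−d)·₄φ₃(a,b,c,qd; u,v,qw; q,q) + (w−d)(1−c)·₄φ₃(a,b,qc,d; u,v,qw; q,q) = (c−d)(1−w)·₄φ₃(a,b,c,d; u,v,w; q,q), where all series are interpreted as terminating sums (one of the upper parameters is q^{−n}). -/
open Finset

/-- The q-Pochhammer symbol `(a;q)_k = ∏_{i=0}^{k-1} (1 - a qⁱ)`. -/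
def qPoch (q a : ℂ) (k : ℕ) : ℂ := ∏ i ∈ range k, (1 - a * q ^ i)

/-- The terminating basic hypergeometric series `₄φ₃(a,b,c,d; u,v,w; q, q)`,
truncated at `n` (one of the upper parameters is assumed to be `q^{-n}`). -/
noncomputable def phi43 (n : ℕ) (q a b c d u v w : ℂ) : ℂ :=
  ∑ k ∈ range (n + 1),
    (qPoch q a k * qPoch q b k * qPoch q c k * qPoch q d k) /
      (qPoch q q k * qPoch q u k * qPoch q v k * qPoch q w k) * q ^ k

lemma qPoch_shift (q x : ℂ) (k : ℕ) :
    (1 - x) * qPoch q (q * x) k = qPoch q x k * (1 - x * q ^ k) := by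
  have h1 : (1 - x) * qPoch q (q * x) k = qPoch q x (k + 1) := by
    rw [qPoch, qPoch, Finset.prod_range_succ']
    simp only [pow_zero, mul_one]
    rw [mul_comm]
    congr 1
    apply Finset.prod_congr rfl
    intro i _
    ring
  have h2 : qPoch q x (k + 1) = qPoch q x k * (1 - x * q ^ k) := by
    rw [qPoch, qPoch, Finset.prod_range_succ]
  rw [h1, h2]

/-- the contiguous relation
`(c−w)(1−d)·₄φ₃(a,b,c,qd;u,v,qw) + (w−d)(1−c)·₄φ₃(a,b,qc,d;u,v,qw)
  = (c−d)(1−w)·₄φ₃(a,b,c,d;u,v,w)`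
for terminating series with `a = q^{-n}`, `|q| < 1`, and no vanishing denominators. -/
theorem phi43_contiguous_relation (n : ℕ) (q a b c d u v w : ℂ)
    (hq : ‖q‖ < 1) (hq0 : q ≠ 0) (ha : a = q ^ (-(n : ℤ)))
    (hden : ∀ k ≤ n + 1,
      qPoch q q k ≠ 0 ∧ qPoch q u k ≠ 0 ∧ qPoch q v k ≠ 0 ∧
        qPoch q w k ≠ 0 ∧ qPoch q (q * w) k ≠ 0) :
    (c - w) * (1 - d) * phi43 n q a b c (q * d) u v (q * w) +
      (w - d) * (1 - c) * phi43 n q a b (q * c) d u v (q * w) =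
    (c - d) * (1 - w) * phi43 n q a b c d u v w := by
  unfold phi43
  rw [Finset.mul_sum, Finset.mul_sum, Finset.mul_sum, ← Finset.sum_add_distrib]
  apply Finset.sum_congr rfl
  intro k hk
  have hkle : k ≤ n + 1 := le_of_lt (Finset.mem_range.mp hk)
  obtain ⟨hQ, hU, hV, hW, hWq⟩ := hden k hkle
  have hd := qPoch_shift q d k
  have hc := qPoch_shift q c k
  have hw := qPoch_shift q w k
  set A := qPoch q a k
  set B := qPoch q b k
  set C := qPoch q c k
  set D := qPoch q d k
  set Cq := qPoch q (q * c) k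
  set Dq := qPoch q (q * d) k
  set W := qPoch q w k
  set Wq := qPoch q (q * w) k
  set Q := qPoch q q k
  set U := qPoch q u k
  set V := qPoch q v k
  field_simp
  ring_nf
  linear_combination (A * B * ((c - w) * C * W)) * hd +
    (A * B * ((w - d) * D * W)) * hc -
    (A * B * ((c - d) * C * D)) * hw
end

section
/- (Eynard–Mehta type formula for a two-step chain) Let X be a finite set, and for t = 0, 1 let {f^t_n}_{n=0}^{|X|−1} be an orthonormal basis of ℓ²(X) (real-valued), and let c_n > 0 be constants. Define v(x,y) = Σ_n c_n f^0_n(x) f^1_n(y). Suppose an N-point process has joint distribution Prob(X₀ = (x₁,…,x_N), X₁ = (y₁,…,y_N)) = (det[f^0_{i−1}(x_j)] · det[v(x_i,y_j)] · det[f^1_{i−1}(y_j)]) / ∏_{n=0}^{N−1} c_n, for x₁<…<x_N and y₁<…<y_N. Then the one-time marginal of X₀ is (det[f^0_{i−1}(x_j)])² and the conditional law of X₁ given X₀ is det[v(x_i,y_j)]det[f^1_{i−1}(y_j)] / (det[f^0_{i−1}(x_j)] ∏_n c_n); in particular these marginal and transition expressions sum to the stated joint law and the transition kernel is stochastic: Σ_{y₁<…<y_N}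 det[v(x_i,y_j)] det[f^1_{i−1}(y_j)] = det[f^0_{i−1}(x_j)] ∏_{n=0}^{N−1} c_n. -/
open Finset Equiv Equiv.Perm Matrix

/-- Equiv between (strictly monotone tuple, permutation) pairs and injective tuples. -/
noncomputable def monoPermEquiv (N M : ℕ) :
    ({y : Fin N → Fin M // StrictMono y} × Equiv.Perm (Fin N)) ≃
      {g : Fin N → Fin M // Function.Injective g} :=
  Equiv.ofBijective (fun p => ⟨p.1.1 ∘ p.2, p.1.2.injective.comp p.2.injective⟩) (by
    constructor
    · rintro ⟨⟨y, hy⟩, σ⟩ ⟨⟨y', hy'⟩, σ'⟩ h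
      simp only [Subtype.mk.injEq] at h
      have hyy' : y = y' := by
        have hr : Set.range y = Set.range y' := by
          rw [← σ.surjective.range_comp y, ← σ'.surjective.range_comp y', h]
        haveI inst : WellFoundedLT (Fin N) := inferInstance
        have h2 := @Set.range_injOn_strictMono (Fin N) (Fin M) _ _ inst
        exact h2 hy hy' hr
      subst hyy'
      have hσ : σ = σ' := Equiv.ext fun i => hy.injective (congrFun h i)
      simp [hσ]
    · rintro ⟨g, hg⟩
      have hcard : (Finset.univ.image g).card = N := by
        rw [Finset.card_image_of_injective _ hg, Finset.card_univ, Fintype.card_fin]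
      have hmem : ∀ i, g i ∈ Finset.univ.image g :=
        fun i => Finset.mem_image_of_mem g (Finset.mem_univ i)
      let σ0 : Fin N → Fin N :=
        fun i => ((Finset.univ.image g).orderIsoOfFin hcard).symm ⟨g i, hmem i⟩
      have hσ0inj : Function.Injective σ0 := by
        intro a b hab
        apply hg
        have := congrArg (fun z => ((((Finset.univ.image g).orderIsoOfFin hcard) z : Fin M))) hab
        simpa [σ0] using this
      refine ⟨⟨⟨⇑((Finset.univ.image g).orderEmbOfFin hcard),
        ((Finset.univ.image g).orderEmbOfFin hcard).strictMono⟩,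
        Equiv.ofBijective σ0 (Finite.injective_iff_bijective.mp hσ0inj)⟩, ?_⟩
      apply Subtype.ext
      funext i
      show (Finset.univ.image g).orderEmbOfFin hcard (σ0 i) = g i
      rw [← Finset.coe_orderIsoOfFin_apply]
      simp [σ0])

/-- Cauchy–Binet over strictly increasing tuples. -/
theorem cauchy_binet_mono {N M : ℕ} (A B : Matrix (Fin N) (Fin M) ℝ) :
    ∑ y : {y : Fin N → Fin M // StrictMono y},
      Matrix.det (Matrix.of fun i j : Fin N => A i (y.1 j)) *
        Matrix.det (Matrix.of fun i j : Fin N => B i (y.1 j)) =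
    Matrix.det (A * Bᵀ) := by
  have step1 : Matrix.det (A * Bᵀ) =
      ∑ g : Fin N → Fin M, ∑ σ : Equiv.Perm (Fin N),
        ((Equiv.Perm.sign σ : ℤ) : ℝ) * ∏ i, A (σ i) (g i) * B i (g i) := by
    simp only [det_apply', Matrix.mul_apply, transpose_apply, prod_univ_sum, mul_sum,
      Fintype.piFinset_univ]
    rw [Finset.sum_comm]
  have inner : ∀ g : Fin N → Fin M,
      (∑ σ : Equiv.Perm (Fin N), ((Equiv.Perm.sign σ : ℤ) : ℝ) * ∏ i, A (σ i) (g i) * B i (g i)) =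
      (∏ i, B i (g i)) * Matrix.det (Matrix.of fun i j : Fin N => A i (g j)) := by
    intro g
    rw [det_apply', Finset.mul_sum]
    refine Finset.sum_congr rfl fun σ _ => ?_
    rw [prod_mul_distrib]
    simp only [of_apply]
    ring
  rw [step1]
  simp only [inner]
  rw [← Finset.sum_filter_add_sum_filter_not Finset.univ (fun g => Function.Injective g)]
  have hnoninj : ∑ g ∈ Finset.univ.filter (fun g : Fin N → Fin M => ¬ Function.Injective g),
      (∏ i, B i (g i)) * Matrix.det (Matrix.of fun i j : Fin N => A i (g j)) = 0 := by
    apply Finset.sum_eq_zero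
    intro g hg
    simp only [Finset.mem_filter, Function.Injective] at hg
    push_neg at hg
    obtain ⟨a, b, hab, hne⟩ := (Finset.mem_filter.mp hg).2
    have : Matrix.det (Matrix.of fun i j : Fin N => A i (g j)) = 0 :=
      Matrix.det_zero_of_column_eq hne (fun k => by simp [hab])
    rw [this, mul_zero]
  rw [hnoninj, add_zero]
  rw [Finset.sum_subtype (p := fun g : Fin N → Fin M => Function.Injective g) _
    (by simp) (fun g => (∏ i, B i (g i)) * Matrix.det (Matrix.of fun i j : Fin N => A i (g j)))]
  rw [← Fintype.sum_equiv (monoPermEquiv N M)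
      (fun p => (∏ i, B i (p.1.1 (p.2 i))) *
        Matrix.det (Matrix.of fun i j : Fin N => A i (p.1.1 (p.2 j))))
      (fun g => (∏ i, B i (g.1 i)) * Matrix.det (Matrix.of fun i j : Fin N => A i (g.1 j)))
      (fun p => rfl)]
  rw [Fintype.sum_prod_type]
  refine Finset.sum_congr rfl fun y _ => ?_
  have hB : Matrix.det (Matrix.of fun i j : Fin N => B i (y.1 j)) =
      ∑ σ : Equiv.Perm (Fin N), ((Equiv.Perm.sign σ : ℤ) : ℝ) * ∏ i, B i (y.1 (σ i)) := by
    rw [← Matrix.det_transpose, det_apply']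
    refine Finset.sum_congr rfl fun σ _ => ?_
    simp [Matrix.transpose_apply]
  have hA : ∀ σ : Equiv.Perm (Fin N),
      Matrix.det (Matrix.of fun i j : Fin N => A i (y.1 (σ j))) =
      ((Equiv.Perm.sign σ : ℤ) : ℝ) * Matrix.det (Matrix.of fun i j : Fin N => A i (y.1 j)) := by
    intro σ
    have := Matrix.det_permute' σ (Matrix.of fun i j : Fin N => A i (y.1 j))
    simpa [Matrix.submatrix] using this
  rw [hB, Finset.mul_sum]
  refine Finset.sum_congr rfl fun σ _ => ?_
  rw [hA σ]
  ring


/-- Eynard–Mehta type identity for a two-step chain. Let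
`{f⁰_n}`, `{f¹_n}` be orthonormal bases of `ℓ²({0,…,L})`, `c_n > 0`, and
`v(x,y) = Σ_n c_n f⁰_n(x) f¹_n(y)`. Then summing over increasing `N`-tuples `y`,
`Σ_y det[v(xᵢ,y_j)] det[f¹_{i−1}(y_j)] = det[f⁰_{i−1}(x_j)] ∏_{n<N} c_n`,
so that the conditional law of `X₁` given `X₀` is a stochastic kernel and the
joint law factors into the marginal `det[f⁰]²` times the transition kernel. -/
theorem eynard_mehta_two_step (L N : ℕ) (hN : N ≤ L + 1)
    (f0 f1 : Fin (L + 1) → Fin (L + 1) → ℝ) (c : Fin (L + 1) → ℝ)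
    (hortho0 : ∀ m n : Fin (L + 1), ∑ x : Fin (L + 1), f0 m x * f0 n x =
      if m = n then 1 else 0)
    (hortho1 : ∀ m n : Fin (L + 1), ∑ x : Fin (L + 1), f1 m x * f1 n x =
      if m = n then 1 else 0)
    (hc : ∀ n, 0 < c n)
    (v : Fin (L + 1) → Fin (L + 1) → ℝ)
    (hv : ∀ x y, v x y = ∑ n : Fin (L + 1), c n * f0 n x * f1 n y)
    (x : Fin N → Fin (L + 1)) (hx : StrictMono x) :
    ∑ y : {y : Fin N → Fin (L + 1) // StrictMono y},
      Matrix.det (Matrix.of fun i j : Fin N => v (x i) (y.1 j)) *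
        Matrix.det (Matrix.of fun i j : Fin N => f1 (Fin.castLE hN i) (y.1 j)) =
    Matrix.det (Matrix.of fun i j : Fin N => f0 (Fin.castLE hN i) (x j)) *
      ∏ n : Fin N, c (Fin.castLE hN n) := by
  have key := cauchy_binet_mono (Matrix.of fun (i : Fin N) (z : Fin (L + 1)) => v (x i) z)
    (Matrix.of fun (k : Fin N) (z : Fin (L + 1)) => f1 (Fin.castLE hN k) z)
  have hentry : (Matrix.of fun (i : Fin N) (z : Fin (L + 1)) => v (x i) z) *
      (Matrix.of fun (k : Fin N) (z : Fin (L + 1)) => f1 (Fin.castLE hN k) z)ᵀ =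
      Matrix.of fun (i k : Fin N) => c (Fin.castLE hN k) * f0 (Fin.castLE hN k) (x i) := by
    ext i k
    simp only [Matrix.mul_apply, Matrix.transpose_apply, Matrix.of_apply]
    calc ∑ z, v (x i) z * f1 (Fin.castLE hN k) z
        = ∑ z, ∑ n, c n * f0 n (x i) * f1 n z * f1 (Fin.castLE hN k) z := by
          refine Finset.sum_congr rfl fun z _ => ?_
          rw [hv, Finset.sum_mul]
      _ = ∑ n, c n * f0 n (x i) * ∑ z, f1 n z * f1 (Fin.castLE hN k) z := by
          rw [Finset.sum_comm]
          refine Finset.sum_congr rfl fun n _ => ?_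
          rw [Finset.mul_sum]
          refine Finset.sum_congr rfl fun z _ => ?_
          ring
      _ = ∑ n, c n * f0 n (x i) * (if n = Fin.castLE hN k then 1 else 0) := by
          simp only [hortho1]
      _ = c (Fin.castLE hN k) * f0 (Fin.castLE hN k) (x i) := by
          simp
  rw [hentry] at key
  simp only [Matrix.of_apply] at key
  rw [key]
  rw [← Matrix.det_transpose]
  have htr : (Matrix.of fun (i k : Fin N) =>
      c (Fin.castLE hN k) * f0 (Fin.castLE hN k) (x i))ᵀ =
      Matrix.of fun (k i : Fin N) => c (Fin.castLE hN k) * f0 (Fin.castLE hN k) (x i) := rfl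
  rw [htr]
  have hdet := Matrix.det_mul_column (fun k : Fin N => c (Fin.castLE hN k))
    (Matrix.of fun (k i : Fin N) => f0 (Fin.castLE hN k) (x i))
  simp only [Matrix.of_apply] at hdet
  rw [hdet, mul_comm]
end
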